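/- arXiv:0811.2526 — 2 statements merged into one kernel-verified Lean document; each statement's English description precedes it below -/
import Mathlib

section
/- If (A) and 3-MSP hold, then for every p, q, s ∈ Σ, the set of superpositions {p,q,s}⁻ equals the λ-closure λ({p,q,s}). -/
universe u v

/-- A state property system: states, a complete lattice of properties, and
the actuality map `xi` assigning to each state the set of actual properties. -/
structure SPS (σ : Type u) (L : Type v) [CompleteLattice L] where
  xi : σ → Set L
  top_mem : ∀ p, ⊤ ∈ xi p
  bot_not_mem : ∀ p, ⊥ ∉ xi p
  sInf_mem : ∀ (p : σ) (A : Set L), (∀ a ∈ A, a ∈ xi p) ↔ sInf A ∈ xi p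
  le_iff : ∀ a b : L, a ≤ b ↔ ∀ r, a ∈ xi r → b ∈ xi r

variable {σ : Type u} {L : Type v} [CompleteLattice L]

/-- λ{p,q} : the set of superpositions of the pair p, q. -/
def SPS.lamPair (S : SPS σ L) (p q : σ) : Set σ := {s | S.xi p ∩ S.xi q ⊆ S.xi s}

/-- A set is λ-closed if it contains λ{p,q} for each pair of its points. -/
def SPS.lamClosed (S : SPS σ L) (T : Set σ) : Prop :=
  ∀ p ∈ T, ∀ q ∈ T, S.lamPair p q ⊆ T

/-- λ(P) : the intersection of all λ-closed sets containing P. -/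
def SPS.lam (S : SPS σ L) (P : Set σ) : Set σ :=
  ⋂₀ {G | S.lamClosed G ∧ P ⊆ G}

/-- The set of superpositions of a set of states. -/
def SPS.bar (S : SPS σ L) (T : Set σ) : Set σ :=
  {p | (⋂ s ∈ T, S.xi s) ⊆ S.xi p}

/-- Property (A): at least two states and `xi` order-reflecting (injective). -/
def SPS.propA (S : SPS σ L) : Prop :=
  (∃ p q : σ, p ≠ q) ∧ ∀ p q : σ, S.xi p ⊆ S.xi q → p = q

/-- p is a minimal superposition of A. -/
def SPS.minSup (S : SPS σ L) (A : Set σ) (p : σ) : Prop :=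
  p ∈ S.bar A ∧ ∀ Q : Set σ, Q ⊂ A → p ∉ S.bar Q

/-- The minimal superposition principle for a given set A. -/
def SPS.MSPon (S : SPS σ L) (A : Set σ) : Prop :=
  ∀ p : σ, S.minSup A p →
    ∀ S₁ S₂ : Set σ, S₁ ⊂ A → S₂ ⊂ A → S₁ ∩ S₂ = ∅ → S₁ ∪ S₂ = A →
      (S.bar (S₁ ∪ {p}) ∩ S.bar S₂).Nonempty

/-- n-MSP : MSP for all sets of cardinality at most n. -/
def SPS.nMSP (S : SPS σ L) (n : ℕ) : Prop :=
  ∀ A : Set σ, A.Finite → A.ncard ≤ n → S.MSPon A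

/-- f-MSP : MSP for all finite sets. -/
def SPS.fMSP (S : SPS σ L) : Prop := ∀ A : Set σ, A.Finite → S.MSPon A


namespace SPS

variable (S : SPS σ L)

lemma bar_mono' {T T' : Set σ} (h : T ⊆ T') : S.bar T ⊆ S.bar T' := by
  intro r hr x hx
  apply hr
  simp only [Set.mem_iInter] at hx ⊢
  exact fun i hi => hx i (h hi)

lemma subset_bar' (T : Set σ) : T ⊆ S.bar T := by
  intro t ht x hx
  simp only [Set.mem_iInter] at hx
  exact hx t ht

lemma lamClosed_bar' (T : Set σ) : S.lamClosed (S.bar T) := by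
  intro a ha b hb u hu x hx
  exact hu ⟨ha hx, hb hx⟩

lemma bar_pair' (a b : σ) : S.bar {a, b} = S.lamPair a b := by
  ext r
  simp [SPS.bar, SPS.lamPair]

lemma bar_singleton' (hA : S.propA) (a : σ) : S.bar {a} = {a} := by
  have h : (⋂ x ∈ ({a} : Set σ), S.xi x) = S.xi a := by simp
  ext r
  constructor
  · intro hr
    have hsub : S.xi a ⊆ S.xi r := by
      rw [← h]; exact hr
    exact (hA.2 a r hsub).symm
  · intro hr
    rw [Set.mem_singleton_iff] at hr
    subst hr
    exact S.subset_bar' {r} rfl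

lemma subset_lam' (T : Set σ) : T ⊆ S.lam T := by
  intro t ht
  intro G hG
  exact hG.2 ht

lemma lamClosed_lam' (T : Set σ) : S.lamClosed (S.lam T) := by
  intro a ha b hb u hu
  intro G hG
  exact hG.1 a (ha G hG) b (hb G hG) hu

lemma lamPair_subset_lam' {T : Set σ} {a b : σ} (ha : a ∈ S.lam T) (hb : b ∈ S.lam T) :
    S.lamPair a b ⊆ S.lam T := S.lamClosed_lam' T a ha b hb

lemma lam_subset' {T G : Set σ} (hG : S.lamClosed G) (hTG : T ⊆ G) : S.lam T ⊆ G :=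
  fun r hr => Set.mem_sInter.mp hr G ⟨hG, hTG⟩

end SPS

lemma ssub_of_mem_not_mem {s t : Set σ} (h1 : s ⊆ t) {x : σ} (hx : x ∈ t) (hx' : x ∉ s) :
    s ⊂ t := (Set.ssubset_iff_of_subset h1).mpr ⟨x, hx, hx'⟩

theorem stmt6 (S : SPS σ L) (hA : S.propA) (h3 : S.nMSP 3) :
    ∀ p q s : σ, S.bar {p, q, s} = S.lam {p, q, s} := by
  intro p q s
  set A : Set σ := {p, q, s} with hAdef
  have hpA : p ∈ A := by simp [hAdef]
  have hqA : q ∈ A := by simp [hAdef]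
  have hsA : s ∈ A := by simp [hAdef]
  apply Set.Subset.antisymm
  · -- bar ⊆ lam : the hard direction
    intro r hr
    have key : ∀ (Q : Set σ) (a b : σ), a ∈ A → b ∈ A → Q ⊆ {a, b} → r ∈ S.bar Q →
        r ∈ S.lam A := by
      intro Q a b haA hbA hQab hrQ
      apply S.lamPair_subset_lam' (S.subset_lam' A haA) (S.subset_lam' A hbA)
      rw [← S.bar_pair']
      exact S.bar_mono' hQab hrQ
    by_cases hpq : p = q
    · refine key A p s hpA hsA ?_ hr
      intro y hy
      simp only [hAdef, Set.mem_insert_iff, Set.mem_singleton_iff] at hy ⊢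
      rcases hy with rfl | rfl | rfl
      · exact Or.inl rfl
      · exact Or.inl hpq.symm
      · exact Or.inr rfl
    by_cases hps : p = s
    · refine key A p q hpA hqA ?_ hr
      intro y hy
      simp only [hAdef, Set.mem_insert_iff, Set.mem_singleton_iff] at hy ⊢
      rcases hy with rfl | rfl | rfl
      · exact Or.inl rfl
      · exact Or.inr rfl
      · exact Or.inl hps.symm
    by_cases hqs : q = s
    · refine key A p q hpA hqA ?_ hr
      intro y hy
      simp only [hAdef, Set.mem_insert_iff, Set.mem_singleton_iff] at hy ⊢
      rcases hy with rfl | rfl | rfl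
      · exact Or.inl rfl
      · exact Or.inr rfl
      · exact Or.inr hqs.symm
    -- now p, q, s are pairwise distinct
    by_cases hmin : ∀ Q : Set σ, Q ⊂ A → r ∉ S.bar Q
    · -- r is a minimal superposition of A
      have hrne : r ≠ p := by
        rintro rfl
        refine hmin {r} (ssub_of_mem_not_mem (by simp [hAdef]) hqA ?_) (S.subset_bar' {r} rfl)
        simp only [Set.mem_singleton_iff]
        exact fun h => hpq h.symm
      have h3card : A.ncard ≤ 3 := by
        have h1 := Set.ncard_insert_le p ({q, s} : Set σ)
        have h2 := Set.ncard_insert_le q ({s} : Set σ)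
        have h3' := Set.ncard_singleton (α := σ) s
        simp only [hAdef]
        omega
      have hpss : ({p} : Set σ) ⊂ A := by
        refine ssub_of_mem_not_mem (by simp [hAdef]) hqA ?_
        simp only [Set.mem_singleton_iff]
        exact fun h => hpq h.symm
      have hqsss : ({q, s} : Set σ) ⊂ A := by
        refine ssub_of_mem_not_mem ?_ hpA ?_
        · intro y hy
          simp only [Set.mem_insert_iff, Set.mem_singleton_iff] at hy
          rcases hy with rfl | rfl <;> simp [hAdef]
        · simp only [Set.mem_insert_iff, Set.mem_singleton_iff]
          push_neg
          exact ⟨hpq, hps⟩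
      have hdisj : ({p} : Set σ) ∩ {q, s} = ∅ := by
        ext y
        simp only [Set.mem_inter_iff, Set.mem_singleton_iff, Set.mem_insert_iff,
          Set.mem_empty_iff_false, iff_false, not_and]
        rintro rfl
        push_neg
        exact ⟨hpq, hps⟩
      have hunion : ({p} : Set σ) ∪ {q, s} = A := by
        rw [Set.singleton_union]
      obtain ⟨t, ht1, ht2⟩ :=
        h3 A (Set.toFinite A) h3card r ⟨hr, hmin⟩ {p} {q, s} hpss hqsss hdisj hunion
      rw [Set.singleton_union] at ht1
      -- ht1 : t ∈ S.bar {p, r},  ht2 : t ∈ S.bar {q, s}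
      have htlam : t ∈ S.lam A :=
        S.lamPair_subset_lam' (S.subset_lam' A hqA) (S.subset_lam' A hsA)
          ((S.bar_pair' q s) ▸ ht2)
      have hrqs : r ∉ S.bar {q, s} := hmin {q, s} hqsss
      -- t is a minimal superposition of {p, r}
      have htmin : S.minSup {p, r} t := by
        refine ⟨ht1, ?_⟩
        intro Q hQ htQ
        obtain ⟨x, hx1, hx2⟩ := Set.exists_of_ssubset hQ
        simp only [Set.mem_insert_iff, Set.mem_singleton_iff] at hx1
        have hQsub : Q ⊆ {p} ∨ Q ⊆ {r} := by
          rcases hx1 with rfl | rfl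
          · right
            intro y hy
            have hy' := hQ.1 hy
            simp only [Set.mem_insert_iff, Set.mem_singleton_iff] at hy' ⊢
            rcases hy' with rfl | rfl
            · exact absurd hy hx2
            · rfl
          · left
            intro y hy
            have hy' := hQ.1 hy
            simp only [Set.mem_insert_iff, Set.mem_singleton_iff] at hy' ⊢
            rcases hy' with rfl | rfl
            · rfl
            · exact absurd hy hx2
        rcases hQsub with hQp | hQr
        · have htp : t ∈ S.bar {p} := S.bar_mono' hQp htQ
          rw [S.bar_singleton' hA, Set.mem_singleton_iff] at htp
          subst htp
          apply hrqs
          intro x hx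
          apply hr
          simp only [hAdef, Set.mem_iInter, Set.mem_insert_iff, Set.mem_singleton_iff]
          rintro i (rfl | rfl | rfl)
          · exact ht2 hx
          · simp only [Set.mem_iInter, Set.mem_insert_iff, Set.mem_singleton_iff] at hx
            exact hx i (Or.inl rfl)
          · simp only [Set.mem_iInter, Set.mem_insert_iff, Set.mem_singleton_iff] at hx
            exact hx i (Or.inr rfl)
        · have htr : t ∈ S.bar {r} := S.bar_mono' hQr htQ
          rw [S.bar_singleton' hA, Set.mem_singleton_iff] at htr
          subst htr
          exact hrqs ht2
      -- second application of 3-MSP on {p, r} with S₁ = {p}, S₂ = {r}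
      have h2card : ({p, r} : Set σ).ncard ≤ 3 := by
        have h1 := Set.ncard_insert_le p ({r} : Set σ)
        have h2 := Set.ncard_singleton (α := σ) r
        omega
      have hp2 : ({p} : Set σ) ⊂ {p, r} := by
        refine ssub_of_mem_not_mem (by simp) (show r ∈ ({p, r} : Set σ) by simp) ?_
        simp only [Set.mem_singleton_iff]
        exact hrne
      have hr2 : ({r} : Set σ) ⊂ {p, r} := by
        refine ssub_of_mem_not_mem (by simp) (show p ∈ ({p, r} : Set σ) by simp) ?_
        simp only [Set.mem_singleton_iff]
        exact fun h => hrne h.symm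
      have hdisj2 : ({p} : Set σ) ∩ {r} = ∅ := by
        ext y
        simp only [Set.mem_inter_iff, Set.mem_singleton_iff, Set.mem_empty_iff_false, iff_false,
          not_and]
        rintro rfl
        exact fun h => hrne h.symm
      have hunion2 : ({p} : Set σ) ∪ {r} = {p, r} := by
        rw [Set.singleton_union]
      obtain ⟨u, hu1, hu2⟩ :=
        h3 {p, r} (Set.toFinite _) h2card t htmin {p} {r} hp2 hr2 hdisj2 hunion2
      rw [S.bar_singleton' hA, Set.mem_singleton_iff] at hu2
      subst hu2
      rw [Set.singleton_union] at hu1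
      -- hu1 : r ∈ S.bar {p, t}
      exact S.lamPair_subset_lam' (S.subset_lam' A hpA) htlam ((S.bar_pair' p t) ▸ hu1)
    · -- r is a superposition of a proper subset Q of A
      push_neg at hmin
      obtain ⟨Q, hQA, hrQ⟩ := hmin
      obtain ⟨x, hx1, hx2⟩ := Set.exists_of_ssubset hQA
      simp only [hAdef, Set.mem_insert_iff, Set.mem_singleton_iff] at hx1
      rcases hx1 with rfl | rfl | rfl
      · refine key Q q s hqA hsA ?_ hrQ
        intro y hy
        have hy' := hQA.1 hy
        simp only [hAdef, Set.mem_insert_iff, Set.mem_singleton_iff] at hy'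
        simp only [Set.mem_insert_iff, Set.mem_singleton_iff]
        rcases hy' with rfl | rfl | rfl
        · exact absurd hy hx2
        · exact Or.inl rfl
        · exact Or.inr rfl
      · refine key Q p s hpA hsA ?_ hrQ
        intro y hy
        have hy' := hQA.1 hy
        simp only [hAdef, Set.mem_insert_iff, Set.mem_singleton_iff] at hy'
        simp only [Set.mem_insert_iff, Set.mem_singleton_iff]
        rcases hy' with rfl | rfl | rfl
        · exact Or.inl rfl
        · exact absurd hy hx2
        · exact Or.inr rfl
      · refine key Q p q hpA hqA ?_ hrQ
        intro y hy
        have hy' := hQA.1 hy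
        simp only [hAdef, Set.mem_insert_iff, Set.mem_singleton_iff] at hy'
        simp only [Set.mem_insert_iff, Set.mem_singleton_iff]
        rcases hy' with rfl | rfl | rfl
        · exact Or.inl rfl
        · exact Or.inr rfl
        · exact absurd hy hx2
  · -- lam ⊆ bar : bar A is λ-closed and contains A
    exact S.lam_subset' (S.lamClosed_bar' A) (S.subset_bar' A)
end

section
/- Suppose (A) and 3-MSP hold and Σ = ⋃_i S_i where each S_i is λ-closed and satisfies the superposition principle. Then the S_i are sectors if and only if each S_i is λ-clopen (both S_i and Σ \ S_i are λ-closed). -/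
universe u v

variable {σ : Type u} {L : Type v} [CompleteLattice L]

/-- The superposition principle holds on a set T. -/
def SPS.SPon (S : SPS σ L) (T : Set σ) : Prop :=
  ∀ p ∈ T, ∀ q ∈ T, p ≠ q → ∃ r ∈ S.bar {p, q}, r ≠ p ∧ r ≠ q

/-- A sector: a nonempty λ-closed set on which SP holds and which is
superposition-isolated from its complement. -/
def SPS.Sector (S : SPS σ L) (T : Set σ) : Prop :=
  T.Nonempty ∧ S.lamClosed T ∧ S.SPon T ∧
    ∀ p ∈ T, ∀ q, q ∉ T → S.bar {p, q} = ({p, q} : Set σ)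

/-- s ≈ t : s = t or there is a superposition of {s,t} distinct from both. -/
def SPS.rel (S : SPS σ L) (s t : σ) : Prop :=
  s = t ∨ ∃ r ∈ S.bar {s, t}, r ≠ s ∧ r ≠ t


lemma SPS.bar_pair_eq (S : SPS σ L) (p q : σ) : S.bar {p, q} = S.lamPair p q := by
  ext s
  simp [SPS.bar, SPS.lamPair, Set.biInter_pair]

lemma SPS.mem_bar_pair_left (S : SPS σ L) (p q : σ) : p ∈ S.bar {p, q} := by
  rw [S.bar_pair_eq]
  exact Set.inter_subset_left

lemma SPS.mem_bar_pair_right (S : SPS σ L) (p q : σ) : q ∈ S.bar {p, q} := by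
  rw [S.bar_pair_eq]
  exact Set.inter_subset_right

lemma SPS.bar_mono (S : SPS σ L) {A B : Set σ} (h : A ⊆ B) : S.bar A ⊆ S.bar B := by
  intro s hs
  refine Set.Subset.trans ?_ hs
  exact Set.biInter_mono h (fun _ _ => le_refl _)

lemma SPS.bar_singleton (S : SPS σ L) (hA : S.propA) (p : σ) : S.bar {p} = {p} := by
  have h0 : (⋂ t ∈ ({p} : Set σ), S.xi t) = S.xi p := by simp
  ext s
  constructor
  · intro h
    have h' : S.xi p ⊆ S.xi s := by rw [← h0]; exact h
    exact (hA.2 p s h').symm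
  · rintro rfl
    show (⋂ t ∈ ({s} : Set σ), S.xi t) ⊆ S.xi s
    simp

lemma SPS.bar_empty (S : SPS σ L) : S.bar ∅ = ∅ := by
  ext s
  simp only [Set.mem_empty_iff_false, iff_false]
  intro h
  have h' : Set.univ ⊆ S.xi s := by
    have h0 : (⋂ t ∈ (∅ : Set σ), S.xi t) = Set.univ := by simp
    rw [← h0]; exact h
  exact S.bot_not_mem s (h' (Set.mem_univ _))

/-- Key lemma from 3-MSP: a nontrivial superposition can be "swapped". -/
lemma SPS.swap_mem (S : SPS σ L) (hA : S.propA) (h3 : S.nMSP 3) {p q r : σ}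
    (hpq : p ≠ q) (hr : r ∈ S.bar {p, q}) (hrp : r ≠ p) (hrq : r ≠ q) :
    q ∈ S.bar {p, r} := by
  have hmin : S.minSup {p, q} r := by
    refine ⟨hr, ?_⟩
    intro Q hQ hrQ
    by_cases hp : p ∈ Q <;> by_cases hq : q ∈ Q
    · exact hQ.2 (by rintro x (rfl | rfl) <;> assumption)
    · have hQp : Q ⊆ {p} := by
        intro x hx
        rcases hQ.1 hx with rfl | rfl
        · rfl
        · exact absurd hx hq
      have := S.bar_mono hQp hrQ
      rw [S.bar_singleton hA] at this
      exact hrp this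
    · have hQq : Q ⊆ {q} := by
        intro x hx
        rcases hQ.1 hx with rfl | rfl
        · exact absurd hx hp
        · rfl
      have := S.bar_mono hQq hrQ
      rw [S.bar_singleton hA] at this
      exact hrq this
    · have hQe : Q ⊆ (∅ : Set σ) := by
        intro x hx
        rcases hQ.1 hx with rfl | rfl
        · exact absurd hx hp
        · exact absurd hx hq
      have := S.bar_mono hQe hrQ
      rw [S.bar_empty] at this
      exact this
  have hss1 : ({p} : Set σ) ⊂ {p, q} := by
    constructor
    · intro x hx; rcases hx with rfl; exact Set.mem_insert _ _
    · intro h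
      have := h (Set.mem_insert_of_mem p rfl)
      exact hpq (Set.mem_singleton_iff.mp this).symm
  have hss2 : ({q} : Set σ) ⊂ {p, q} := by
    constructor
    · intro x hx; rcases hx with rfl; exact Set.mem_insert_of_mem _ rfl
    · intro h
      have := h (Set.mem_insert p {q})
      exact hpq (Set.mem_singleton_iff.mp this)
  have hinter : ({p} : Set σ) ∩ {q} = ∅ := by
    ext x
    simp only [Set.mem_inter_iff, Set.mem_singleton_iff, Set.mem_empty_iff_false, iff_false,
      not_and]
    rintro rfl; exact hpq
  have hunion : ({p} : Set σ) ∪ {q} = {p, q} := by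
    ext x
    simp only [Set.mem_union, Set.mem_singleton_iff, Set.mem_insert_iff]
  obtain ⟨t, ht1, ht2⟩ := h3 {p, q} (Set.toFinite _) (by
      calc ({p, q} : Set σ).ncard ≤ 2 := by
            simpa using Set.ncard_insert_le p {q}
        _ ≤ 3 := by norm_num)
    r hmin {p} {q} hss1 hss2 hinter hunion
  rw [S.bar_singleton hA] at ht2
  rcases ht2 with rfl
  have : ({p} : Set σ) ∪ {r} = {p, r} := by
    ext x
    simp only [Set.mem_union, Set.mem_singleton_iff, Set.mem_insert_iff]
  rwa [this] at ht1

theorem stmt18 (S : SPS σ L) (hA : S.propA) (h3 : S.nMSP 3)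
    {ι : Type*} (T : ι → Set σ)
    (hcover : (⋃ i, T i) = Set.univ)
    (hne : ∀ i, (T i).Nonempty)
    (hclosed : ∀ i, S.lamClosed (T i))
    (hSP : ∀ i, S.SPon (T i)) :
    (∀ i, S.Sector (T i)) ↔ (∀ i, S.lamClosed (T i) ∧ S.lamClosed (T i)ᶜ) := by
  constructor
  · -- sectors → clopen
    intro hsec i
    refine ⟨hclosed i, ?_⟩
    intro q hq q' hq' r hr
    simp only [Set.mem_compl_iff] at hq hq' ⊢
    intro hrT
    rw [← S.bar_pair_eq] at hr
    by_cases hqq' : q = q'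
    · subst hqq'
      have : r ∈ S.bar {q} := by
        have : ({q, q} : Set σ) = {q} := by simp
        rwa [this] at hr
      rw [S.bar_singleton hA] at this
      rcases this with rfl
      exact hq hrT
    · have hrq : r ≠ q := by rintro rfl; exact hq hrT
      have hrq' : r ≠ q' := by rintro rfl; exact hq' hrT
      have hswap : q' ∈ S.bar {q, r} := S.swap_mem hA h3 hqq' hr hrq hrq'
      have hcomm : ({q, r} : Set σ) = {r, q} := Set.pair_comm q r
      rw [hcomm, (hsec i).2.2.2 r hrT q hq] at hswap
      rcases hswap with rfl | rfl
      · exact hq' hrT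
      · exact hqq' rfl
  · -- clopen → sectors
    intro hclo i
    refine ⟨hne i, hclosed i, hSP i, ?_⟩
    intro p hp q hq
    apply Set.Subset.antisymm
    · intro r hr
      by_contra hrne
      simp only [Set.mem_insert_iff, Set.mem_singleton_iff, not_or] at hrne
      obtain ⟨hrp, hrq⟩ := hrne
      have hpq : p ≠ q := by rintro rfl; exact hq hp
      have hq_mem : q ∈ S.bar {p, r} := S.swap_mem hA h3 hpq hr hrp hrq
      have hr' : r ∈ S.bar {q, p} := by rwa [Set.pair_comm q p]
      have hp_mem : p ∈ S.bar {q, r} := S.swap_mem hA h3 (Ne.symm hpq) hr' hrq hrp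
      by_cases hrT : r ∈ T i
      · have := (hclosed i) p hp r hrT
        rw [← S.bar_pair_eq] at this
        exact hq (this hq_mem)
      · have := (hclo i).2 q hq r hrT
        rw [← S.bar_pair_eq] at this
        exact (this hp_mem) hp
    · intro x hx
      rcases hx with rfl | rfl
      · exact S.mem_bar_pair_left _ _
      · exact S.mem_bar_pair_right _ _
end
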